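/- For g ≥ 2, a seed α ∈ 𝒜_g, λ, j ∈ ℤ_{≥0}, and any β ∈ ℝ, |F_λ^{[j]}(β)| ≤ C_g · g^{−σ_λ^{[j]}(α)}, where σ_λ^{[j]}(α) := Σ_{0≤i<λ} γ_i^{[j]}(α), γ_i^{[j]}(α) := (2 log 2)/((g−1)g⁴(log g)²) · Σ_{0≤m<n<g} ‖(g α_{i+j}(m) − α_{i+j+1}(m)) − (g α_{i+j}(n) − α_{i+j+1}(n))‖², and C_g is a constant depending only on g (one may take C_g = g^{1/20}). -/

import Mathlib

/-- The `i`-th base-`g` digit of `n`. -/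
noncomputable def eps (g n i : ℕ) : ℕ := n / g ^ i % g

/-- The weakly digital function `f_λ^{[j]}` generated by the seed `α`. -/
noncomputable def wdf (g : ℕ) (α : ℕ → ℕ → ℝ) (lam j n : ℕ) : ℝ :=
  ∑ i ∈ Finset.range lam, α (i + j) (eps g n i)

/-- `e(t) = exp(2πit)`. -/
noncomputable def eC (t : ℝ) : ℂ := Complex.exp (2 * (Real.pi : ℂ) * Complex.I * (t : ℂ))

/-- The normalized exponential sum `F_λ^{[j]}(β)`. -/
noncomputable def F (g : ℕ) (α : ℕ → ℕ → ℝ) (lam j : ℕ) (β : ℝ) : ℂ :=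
  ((g : ℂ) ^ lam)⁻¹ * ∑ n ∈ Finset.range (g ^ lam), eC (wdf g α lam j n - β * n)

/-- Distance from `x` to the nearest integer. -/
noncomputable def nint (x : ℝ) : ℝ := |x - round x|

/-- The quantity `γ_i^{[j]}(α)`. -/
noncomputable def gam (g : ℕ) (α : ℕ → ℕ → ℝ) (i j : ℕ) : ℝ :=
  (2 * Real.log 2) / (((g : ℝ) - 1) * (g : ℝ) ^ 4 * (Real.log g) ^ 2) *
    ∑ n ∈ Finset.range g, ∑ m ∈ Finset.range n,
      nint (((g : ℝ) * α (i + j) m - α (i + j + 1) m) -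
        ((g : ℝ) * α (i + j) n - α (i + j + 1) n)) ^ 2

/-- The quantity `σ_λ^{[j]}(α)`. -/
noncomputable def sig (g : ℕ) (α : ℕ → ℕ → ℝ) (lam j : ℕ) : ℝ :=
  ∑ i ∈ Finset.range lam, gam g α i j

/- ### basic `eC` lemmas -/

lemma eC_eq (x : ℝ) : eC x = Complex.exp (((2 * Real.pi * x : ℝ) : ℂ) * Complex.I) := by
  unfold eC
  push_cast
  ring_nf

lemma eC_add (x y : ℝ) : eC (x + y) = eC x * eC y := by
  rw [eC, eC, eC, ← Complex.exp_add]
  congr 1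
  push_cast
  ring

lemma abs_eC (x : ℝ) : ‖eC x‖ = 1 := by
  rw [eC_eq]; exact Complex.norm_exp_ofReal_mul_I _

lemma re_eC (x : ℝ) : (eC x).re = Real.cos (2 * Real.pi * x) := by
  rw [eC_eq]; exact Complex.exp_ofReal_mul_I_re _

lemma conj_eC (x : ℝ) : (starRingEnd ℂ) (eC x) = eC (-x) := by
  rw [eC_eq, eC_eq, ← Complex.exp_conj]
  congr 1
  rw [map_mul, Complex.conj_I, Complex.conj_ofReal]
  push_cast
  ring

lemma eC_mul_conj (x y : ℝ) : eC x * (starRingEnd ℂ) (eC y) = eC (x - y) := by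
  rw [conj_eC, ← eC_add]
  ring_nf

/- ### `nint` lemmas -/

lemma nint_nonneg (x : ℝ) : 0 ≤ nint x := abs_nonneg _

lemma nint_le_half (x : ℝ) : nint x ≤ 1 / 2 := abs_sub_round x

lemma nint_add_le (x y : ℝ) : nint (x + y) ≤ nint x + nint y := by
  have h := round_le (x + y) (round x + round y)
  refine h.trans ?_
  push_cast
  calc |x + y - ((round x : ℝ) + (round y : ℝ))| = |(x - round x) + (y - round y)| := by
        ring_nf
    _ ≤ |x - round x| + |y - round y| := abs_add_le _ _

lemma nint_neg (x : ℝ) : nint (-x) = nint x := by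
  have h1 : nint (-x) ≤ nint x := by
    have h := round_le (-x) (-round x)
    refine h.trans (le_of_eq ?_)
    have e : (-x - ((-round x : ℤ) : ℝ)) = -(x - round x) := by push_cast; ring
    rw [e, abs_neg]; rfl
  have h2 : nint x ≤ nint (-x) := by
    have h := round_le x (-round (-x))
    refine h.trans (le_of_eq ?_)
    have e : (x - ((-round (-x) : ℤ) : ℝ)) = -(-x - round (-x)) := by push_cast; ring
    rw [e, abs_neg]; rfl
  exact le_antisymm h1 h2

lemma nint_natmul_le (n : ℕ) (x : ℝ) : nint ((n : ℝ) * x) ≤ (n : ℝ) * nint x := by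
  have h := round_le ((n : ℝ) * x) ((n : ℤ) * round x)
  refine h.trans (le_of_eq ?_)
  push_cast
  rw [← mul_sub, abs_mul, Nat.abs_cast]
  rfl

/- ### symmetric double-sum splitting -/

lemma sum_sq_split (f : ℕ → ℕ → ℝ) (hsym : ∀ m n, f m n = f n m) (N : ℕ) :
    ∑ m ∈ Finset.range N, ∑ n ∈ Finset.range N, f m n
      = ∑ m ∈ Finset.range N, f m m
        + 2 * ∑ n ∈ Finset.range N, ∑ m ∈ Finset.range n, f m n := by
  induction N with
  | zero => simp
  | succ N ih =>
    have hswap : ∑ n ∈ Finset.range N, f N n = ∑ n ∈ Finset.range N, f n N :=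
      Finset.sum_congr rfl fun n _ => hsym N n
    simp only [Finset.sum_range_succ, Finset.sum_add_distrib]
    rw [hswap] at *
    linarith [ih]

/- ### Jordan-type inequality -/

lemma four_nint_sq_le_sin_sq (t : ℝ) :
    4 * nint t ^ 2 ≤ Real.sin (Real.pi * t) ^ 2 := by
  have hper : Real.sin (Real.pi * t) ^ 2 = Real.sin (Real.pi * (t - round t)) ^ 2 := by
    have harg : Real.pi * t = Real.pi * (t - round t) + (round t : ℤ) * Real.pi := by
      push_cast; ring
    rw [harg, Real.sin_add_int_mul_pi, mul_pow]
    rcases Int.even_or_odd (round t) with he | ho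
    · rw [he.neg_one_zpow]; norm_num
    · rw [ho.neg_one_zpow]; norm_num
  set u : ℝ := t - round t with hu
  have hub : |u| ≤ 1 / 2 := abs_sub_round t
  have hn : nint t ^ 2 = u ^ 2 := by rw [nint, ← hu, sq_abs]
  rw [hper, hn]
  have hpi := Real.pi_pos
  have key : ∀ v : ℝ, 0 ≤ v → v ≤ 1 / 2 → 2 * v ≤ Real.sin (Real.pi * v) := by
    intro v hv0 hv2
    have h1 : Real.pi * v ≤ Real.pi / 2 := by nlinarith
    have h2 := Real.mul_le_sin (x := Real.pi * v) (by positivity) h1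
    have he : 2 / Real.pi * (Real.pi * v) = 2 * v := by field_simp
    linarith [he ▸ h2]
  rcases le_or_gt 0 u with h0 | h0
  · have h2 : u ≤ 1 / 2 := (le_abs_self u).trans hub
    have := key u h0 h2
    nlinarith
  · have h2 : -u ≤ 1 / 2 := (neg_le_abs u).trans hub
    have := key (-u) (by linarith) h2
    rw [show Real.pi * -u = -(Real.pi * u) by ring, Real.sin_neg] at this
    nlinarith

/- ### digit lemmas -/

lemma eps_zero (g a m : ℕ) (ha : a < g) : eps g (a + g * m) 0 = a := by
  simp [eps, Nat.add_mul_mod_self_left, Nat.mod_eq_of_lt ha]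

lemma eps_succ (g a m i : ℕ) (hg : 0 < g) (ha : a < g) :
    eps g (a + g * m) (i + 1) = eps g m i := by
  have h : (a + g * m) / g = m := by
    rw [Nat.add_mul_div_left _ _ hg, Nat.div_eq_of_lt ha, zero_add]
  unfold eps
  rw [pow_succ', ← Nat.div_div_eq_div_mul, h]

lemma wdf_split (g : ℕ) (hg : 0 < g) (α : ℕ → ℕ → ℝ) (lam j a m : ℕ) (ha : a < g) :
    wdf g α (lam + 1) j (a + g * m) = α j a + wdf g α lam (j + 1) m := by
  unfold wdf
  rw [Finset.sum_range_succ']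
  rw [eps_zero g a m ha, zero_add, add_comm]
  congr 1
  refine Finset.sum_congr rfl fun i _ => ?_
  rw [eps_succ g a m i hg ha]
  congr 1
  omega

/- ### splitting a sum over `range (g * N)` -/

lemma sum_range_mul_split (g N : ℕ) (f : ℕ → ℂ) :
    ∑ n ∈ Finset.range (g * N), f n
      = ∑ a ∈ Finset.range g, ∑ m ∈ Finset.range N, f (a + g * m) := by
  induction N with
  | zero => simp
  | succ N ih =>
    have : g * (N + 1) = g * N + g := by ring
    rw [this, Finset.sum_range_add, ih]
    simp only [Finset.sum_range_succ, Finset.sum_add_distrib]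
    congr 1
    refine Finset.sum_congr rfl fun a _ => ?_
    congr 1
    omega

/- ### factorization of the exponential sum -/

lemma sum_eq_prod (g : ℕ) (hg : 2 ≤ g) (α : ℕ → ℕ → ℝ) :
    ∀ lam j (β : ℝ), ∑ n ∈ Finset.range (g ^ lam), eC (wdf g α lam j n - β * n)
      = ∏ i ∈ Finset.range lam, ∑ d ∈ Finset.range g, eC (α (i + j) d - β * g ^ i * d) := by
  intro lam
  induction lam with
  | zero => intro j β; simp [wdf, eC]
  | succ lam ih =>
    intro j β
    have hgpos : 0 < g := by omega
    have hpow : g ^ (lam + 1) = g * g ^ lam := by ring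
    rw [hpow, sum_range_mul_split]
    have hterm : ∀ a ∈ Finset.range g, ∀ m ∈ Finset.range (g ^ lam),
        eC (wdf g α (lam + 1) j (a + g * m) - β * (a + g * m : ℕ))
          = eC (α j a - β * a) * eC (wdf g α lam (j + 1) m - (β * g) * m) := by
      intro a ha m _
      rw [← eC_add]
      congr 1
      rw [wdf_split g hgpos α lam j a m (Finset.mem_range.1 ha)]
      push_cast
      ring
    calc ∑ a ∈ Finset.range g, ∑ m ∈ Finset.range (g ^ lam),
          eC (wdf g α (lam + 1) j (a + g * m) - β * (a + g * m : ℕ))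
        = ∑ a ∈ Finset.range g, ∑ m ∈ Finset.range (g ^ lam),
            eC (α j a - β * a) * eC (wdf g α lam (j + 1) m - (β * g) * m) := by
          exact Finset.sum_congr rfl fun a ha => Finset.sum_congr rfl fun m hm =>
            hterm a ha m hm
      _ = (∑ a ∈ Finset.range g, eC (α j a - β * a)) *
            (∑ m ∈ Finset.range (g ^ lam), eC (wdf g α lam (j + 1) m - (β * g) * m)) := by
          exact (Finset.sum_mul_sum _ _ _ _).symm
      _ = ∏ i ∈ Finset.range (lam + 1), ∑ d ∈ Finset.range g,
            eC (α (i + j) d - β * (g : ℝ) ^ i * d) := by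
          rw [ih (j + 1) (β * g), Finset.prod_range_succ',
            mul_comm (∑ a ∈ Finset.range g, eC (α j a - β * a))]
          congr 1
          · refine Finset.prod_congr rfl fun i _ => Finset.sum_congr rfl fun d _ => ?_
            have he : i + (j + 1) = i + 1 + j := by omega
            rw [he]
            congr 1
            push_cast
            ring
          · refine Finset.sum_congr rfl fun d _ => ?_
            have he : (0 : ℕ) + j = j := by omega
            rw [he]
            congr 1
            push_cast
            ring

/- ### single-level bound -/

lemma level_bound (g : ℕ) (x : ℕ → ℝ) :
    ‖∑ d ∈ Finset.range g, eC (x d)‖ ^ 2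
      ≤ (g : ℝ) ^ 2 - 16 * ∑ n ∈ Finset.range g, ∑ m ∈ Finset.range n, nint (x m - x n) ^ 2 := by
  set T := ∑ d ∈ Finset.range g, eC (x d) with hT
  have h1 : (‖T‖) ^ 2
      = ∑ m ∈ Finset.range g, ∑ n ∈ Finset.range g, Real.cos (2 * Real.pi * (x m - x n)) := by
    rw [Complex.sq_norm]
    have : ((Complex.normSq T : ℝ) : ℂ) = T * (starRingEnd ℂ) T := (Complex.mul_conj T).symm
    have h2 : T * (starRingEnd ℂ) T
        = ∑ m ∈ Finset.range g, ∑ n ∈ Finset.range g, eC (x m - x n) := by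
      rw [hT, map_sum, Finset.sum_mul_sum]
      exact Finset.sum_congr rfl fun m _ => Finset.sum_congr rfl fun n _ => eC_mul_conj _ _
    have h3 : (Complex.normSq T : ℝ) = (T * (starRingEnd ℂ) T).re := by
      rw [← this, Complex.ofReal_re]
    rw [h3, h2, Complex.re_sum]
    refine Finset.sum_congr rfl fun m _ => ?_
    rw [Complex.re_sum]
    exact Finset.sum_congr rfl fun n _ => re_eC _
  have hsym : ∀ m n : ℕ, Real.cos (2 * Real.pi * (x m - x n)) = Real.cos (2 * Real.pi * (x n - x m)) := by
    intro m n
    rw [← Real.cos_neg]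
    ring_nf
  have hsplit2 := sum_sq_split (fun m n => Real.cos (2 * Real.pi * (x m - x n))) hsym g
  rw [h1, hsplit2]
  have hdiag : ∑ m ∈ Finset.range g, Real.cos (2 * Real.pi * (x m - x m)) = g := by
    simp
  rw [hdiag]
  have hterm : ∀ n m : ℕ, Real.cos (2 * Real.pi * (x m - x n)) ≤ 1 - 8 * nint (x m - x n) ^ 2 := by
    intro n m
    have hc : Real.cos (2 * Real.pi * (x m - x n))
        = 1 - 2 * Real.sin (Real.pi * (x m - x n)) ^ 2 := by
      have e : 2 * Real.pi * (x m - x n) = 2 * (Real.pi * (x m - x n)) := by ring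
      rw [e, Real.cos_two_mul]
      have := Real.sin_sq_add_cos_sq (Real.pi * (x m - x n))
      linarith
    rw [hc]
    have := four_nint_sq_le_sin_sq (x m - x n)
    linarith
  have hsum : ∑ n ∈ Finset.range g, ∑ m ∈ Finset.range n, Real.cos (2 * Real.pi * (x m - x n))
      ≤ ∑ n ∈ Finset.range g, ∑ m ∈ Finset.range n, (1 - 8 * nint (x m - x n) ^ 2) :=
    Finset.sum_le_sum fun n _ => Finset.sum_le_sum fun m _ => hterm n m
  have hcount : ∑ n ∈ Finset.range g, ∑ m ∈ Finset.range n, (1 : ℝ) = ∑ n ∈ Finset.range g, (n : ℝ) := by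
    simp
  have hgauss : (g : ℝ) + 2 * ∑ n ∈ Finset.range g, (n : ℝ) ≤ (g : ℝ) ^ 2 := by
    rcases Nat.eq_zero_or_pos g with h0 | h0
    · subst h0; simp
    · have h := Finset.sum_range_id_mul_two g
      have hc : (2 : ℝ) * ∑ n ∈ Finset.range g, (n : ℝ) = (g : ℝ) * ((g : ℝ) - 1) := by
        have h2 := congrArg (fun k : ℕ => (k : ℝ)) h
        push_cast [Nat.cast_sub h0] at h2
        linarith [h2]
      nlinarith [hc]
  have hsplit : ∑ n ∈ Finset.range g, ∑ m ∈ Finset.range n, (1 - 8 * nint (x m - x n) ^ 2)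
      = (∑ n ∈ Finset.range g, (n : ℝ))
        - 8 * ∑ n ∈ Finset.range g, ∑ m ∈ Finset.range n, nint (x m - x n) ^ 2 := by
    rw [Finset.mul_sum, ← hcount, ← Finset.sum_sub_distrib]
    exact Finset.sum_congr rfl fun n _ => by
      rw [Finset.mul_sum, ← Finset.sum_sub_distrib]
  linarith [hsum, hsplit, hgauss]

/- ### per-level seed sums -/

/-- The quantity `s_i^{[j]}(β)` measuring the spread of the level-`i` phases. -/
noncomputable def sAux (g : ℕ) (α : ℕ → ℕ → ℝ) (j : ℕ) (β : ℝ) (i : ℕ) : ℝ :=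
  ∑ n ∈ Finset.range g, ∑ m ∈ Finset.range n,
    nint ((α (i + j) m - β * (g : ℝ) ^ i * m) - (α (i + j) n - β * (g : ℝ) ^ i * n)) ^ 2

lemma sAux_nonneg (g : ℕ) (α : ℕ → ℕ → ℝ) (j : ℕ) (β : ℝ) (i : ℕ) : 0 ≤ sAux g α j β i :=
  Finset.sum_nonneg fun _ _ => Finset.sum_nonneg fun _ _ => sq_nonneg _

lemma gauss_cast (g : ℕ) : (∑ n ∈ Finset.range g, (n : ℝ)) * 2 = (g : ℝ) ^ 2 - g := by
  induction g with
  | zero => simp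
  | succ n ih =>
    rw [Finset.sum_range_succ]
    push_cast
    push_cast at ih
    nlinarith [ih]

lemma cg_nonneg (g : ℕ) (hg : 2 ≤ g) :
    0 ≤ (2 * Real.log 2) / (((g : ℝ) - 1) * (g : ℝ) ^ 4 * (Real.log g) ^ 2) := by
  have hG : (2 : ℝ) ≤ (g : ℝ) := by exact_mod_cast hg
  have hL2 : 0 ≤ Real.log 2 := Real.log_nonneg (by norm_num)
  apply div_nonneg (by linarith)
  exact mul_nonneg (mul_nonneg (by linarith) (by positivity)) (sq_nonneg _)

/-- the per-pair inequality -/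
lemma pair_bound (g : ℕ) (hg : 2 ≤ g) (u v c : ℝ) (hc : c = (g : ℝ) * u - v) :
    nint c ^ 2 ≤ 2 * (g : ℝ) ^ 2 * (nint u ^ 2 + nint v ^ 2) := by
  have hG : (2 : ℝ) ≤ (g : ℝ) := by exact_mod_cast hg
  have h1 : nint c ≤ (g : ℝ) * nint u + nint v := by
    rw [hc, sub_eq_add_neg]
    refine (nint_add_le _ _).trans ?_
    rw [nint_neg]
    exact add_le_add (nint_natmul_le g u) le_rfl
  have h2 : 0 ≤ nint c := nint_nonneg c
  have h3 : nint c ^ 2 ≤ ((g : ℝ) * nint u + nint v) ^ 2 := pow_le_pow_left₀ h2 h1 2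
  have hG4 : (4 : ℝ) ≤ (g : ℝ) ^ 2 := by nlinarith
  nlinarith [h3, sq_nonneg ((g : ℝ) * nint u - nint v), sq_nonneg (nint v), hG4]

/-- `γ_i` is controlled by consecutive spreads. -/
lemma gam_le_pair (g : ℕ) (hg : 2 ≤ g) (α : ℕ → ℕ → ℝ) (i j : ℕ) (β : ℝ) :
    gam g α i j
      ≤ (2 * Real.log 2) / (((g : ℝ) - 1) * (g : ℝ) ^ 4 * (Real.log g) ^ 2)
        * (2 * (g : ℝ) ^ 2 * (sAux g α j β i + sAux g α j β (i + 1))) := by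
  rw [gam]
  refine mul_le_mul_of_nonneg_left ?_ (cg_nonneg g hg)
  unfold sAux
  simp only [show i + 1 + j = i + j + 1 from by omega]
  calc ∑ n ∈ Finset.range g, ∑ m ∈ Finset.range n,
        nint (((g : ℝ) * α (i + j) m - α (i + j + 1) m)
          - ((g : ℝ) * α (i + j) n - α (i + j + 1) n)) ^ 2
      ≤ ∑ n ∈ Finset.range g, ∑ m ∈ Finset.range n,
          (2 * (g : ℝ) ^ 2 *
            (nint ((α (i + j) m - β * (g : ℝ) ^ i * m) - (α (i + j) n - β * (g : ℝ) ^ i * n)) ^ 2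
            + nint ((α (i + j + 1) m - β * (g : ℝ) ^ (i + 1) * m)
                - (α (i + j + 1) n - β * (g : ℝ) ^ (i + 1) * n)) ^ 2)) := by
        refine Finset.sum_le_sum fun n _ => Finset.sum_le_sum fun m _ => ?_
        refine pair_bound g hg _ _ _ ?_
        push_cast
        ring
    _ = 2 * (g : ℝ) ^ 2 *
        ((∑ n ∈ Finset.range g, ∑ m ∈ Finset.range n,
            nint ((α (i + j) m - β * (g : ℝ) ^ i * m) - (α (i + j) n - β * (g : ℝ) ^ i * n)) ^ 2)
          + (∑ n ∈ Finset.range g, ∑ m ∈ Finset.range n,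
            nint ((α (i + j + 1) m - β * (g : ℝ) ^ (i + 1) * m)
              - (α (i + j + 1) n - β * (g : ℝ) ^ (i + 1) * n)) ^ 2)) := by
        simp only [mul_add, Finset.sum_add_distrib, Finset.mul_sum]

set_option maxHeartbeats 1000000 in
/-- `γ_i` never exceeds `1/20`. -/
lemma gam_cap (g : ℕ) (hg : 2 ≤ g) (α : ℕ → ℕ → ℝ) (i j : ℕ) : gam g α i j ≤ 1 / 20 := by
  have hG : (2 : ℝ) ≤ (g : ℝ) := by exact_mod_cast hg
  have hGpos : (0 : ℝ) < g := by linarith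
  have hlog : 0 < Real.log g := Real.log_pos (by linarith)
  have hL2 : (0.6931471803 : ℝ) < Real.log 2 := Real.log_two_gt_d9
  have hL2le : Real.log 2 ≤ Real.log g := Real.log_le_log (by norm_num) hG
  rw [gam]
  have hQ : (∑ n ∈ Finset.range g, ∑ m ∈ Finset.range n,
      nint (((g : ℝ) * α (i + j) m - α (i + j + 1) m)
        - ((g : ℝ) * α (i + j) n - α (i + j + 1) n)) ^ 2) ≤ ((g : ℝ) ^ 2 - g) / 8 := by
    have h14 : ∀ n ∈ Finset.range g, ∑ m ∈ Finset.range n,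
        nint (((g : ℝ) * α (i + j) m - α (i + j + 1) m)
          - ((g : ℝ) * α (i + j) n - α (i + j + 1) n)) ^ 2 ≤ (n : ℝ) * (1 / 4) := by
      intro n _
      calc ∑ m ∈ Finset.range n, nint (((g : ℝ) * α (i + j) m - α (i + j + 1) m)
            - ((g : ℝ) * α (i + j) n - α (i + j + 1) n)) ^ 2
          ≤ ∑ m ∈ Finset.range n, (1 / 4 : ℝ) := by
            refine Finset.sum_le_sum fun m _ => ?_
            have h1 := nint_le_half (((g : ℝ) * α (i + j) m - α (i + j + 1) m)
              - ((g : ℝ) * α (i + j) n - α (i + j + 1) n))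
            have h2 := nint_nonneg (((g : ℝ) * α (i + j) m - α (i + j + 1) m)
              - ((g : ℝ) * α (i + j) n - α (i + j + 1) n))
            nlinarith
        _ = (n : ℝ) * (1 / 4) := by simp [Finset.sum_const, Finset.card_range]
    calc (∑ n ∈ Finset.range g, ∑ m ∈ Finset.range n,
        nint (((g : ℝ) * α (i + j) m - α (i + j + 1) m)
          - ((g : ℝ) * α (i + j) n - α (i + j + 1) n)) ^ 2)
        ≤ ∑ n ∈ Finset.range g, (n : ℝ) * (1 / 4) := Finset.sum_le_sum h14
      _ = (∑ n ∈ Finset.range g, (n : ℝ)) * (1 / 4) := by rw [← Finset.sum_mul]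
      _ = ((g : ℝ) ^ 2 - g) / 8 := by have := gauss_cast g; linarith
  calc (2 * Real.log 2) / (((g : ℝ) - 1) * (g : ℝ) ^ 4 * (Real.log g) ^ 2) *
        (∑ n ∈ Finset.range g, ∑ m ∈ Finset.range n,
          nint (((g : ℝ) * α (i + j) m - α (i + j + 1) m)
            - ((g : ℝ) * α (i + j) n - α (i + j + 1) n)) ^ 2)
      ≤ (2 * Real.log 2) / (((g : ℝ) - 1) * (g : ℝ) ^ 4 * (Real.log g) ^ 2) *
          (((g : ℝ) ^ 2 - g) / 8) := mul_le_mul_of_nonneg_left hQ (cg_nonneg g hg)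
    _ ≤ 1 / 20 := by
        have hD : (0 : ℝ) < ((g : ℝ) - 1) * (g : ℝ) ^ 4 * (Real.log g) ^ 2 := by
          apply mul_pos (mul_pos (by linarith) (by positivity)) (by positivity)
        rw [div_mul_eq_mul_div, div_le_div_iff₀ hD (by norm_num : (0:ℝ) < 20)]
        have h8 : (8 : ℝ) ≤ (g : ℝ) ^ 3 := by nlinarith
        have hsq : Real.log 2 ^ 2 ≤ Real.log g ^ 2 := by nlinarith
        have hGG : (0 : ℝ) ≤ (g : ℝ) ^ 2 - g := by nlinarith
        have hkey : 5 * Real.log 2 ≤ (g : ℝ) ^ 3 * Real.log g ^ 2 := by nlinarith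
        nlinarith [mul_nonneg hGG (sub_nonneg.2 hkey)]

set_option maxHeartbeats 1000000 in
theorem L_infty_bound (g : ℕ) (hg : 2 ≤ g) (α : ℕ → ℕ → ℝ) (lam j : ℕ) (β : ℝ) :
    ‖F g α lam j β‖ ≤ (g : ℝ) ^ ((1 : ℝ) / 20) * (g : ℝ) ^ (-(sig g α lam j)) := by
  have hG : (2 : ℝ) ≤ (g : ℝ) := by exact_mod_cast hg
  have hGpos : (0 : ℝ) < g := by linarith
  have hlog : 0 < Real.log g := Real.log_pos (by linarith)
  -- per-level factor bound
  have hphi : ∀ i, ‖∑ d ∈ Finset.range g,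
        eC (α (i + j) d - β * (g : ℝ) ^ i * d)‖ / g
      ≤ Real.exp (-(8 / (g : ℝ) ^ 2) * sAux g α j β i) := by
    intro i
    have hlb := level_bound g (fun d => α (i + j) d - β * (g : ℝ) ^ i * d)
    refine le_of_pow_le_pow_left₀ (n := 2) (by norm_num) (Real.exp_pos _).le ?_
    rw [div_pow]
    have hE2 : Real.exp (-(8 / (g : ℝ) ^ 2) * sAux g α j β i) ^ 2
        = Real.exp (-(16 / (g : ℝ) ^ 2) * sAux g α j β i) := by
      rw [sq, ← Real.exp_add]
      congr 1
      ring
    have hGsq : (0 : ℝ) < (g : ℝ) ^ 2 := by nlinarith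
    rw [hE2, div_le_iff₀ hGsq]
    have hexp := Real.add_one_le_exp (-(16 / (g : ℝ) ^ 2) * sAux g α j β i)
    have hmul := mul_le_mul_of_nonneg_right hexp (by positivity : (0:ℝ) ≤ (g : ℝ) ^ 2)
    have hdiv : (-(16 / (g : ℝ) ^ 2) * sAux g α j β i + 1) * (g : ℝ) ^ 2
        = (g : ℝ) ^ 2 - 16 * sAux g α j β i := by
      field_simp
      ring
    rw [hdiv] at hmul
    have hsx : sAux g α j β i = ∑ n ∈ Finset.range g, ∑ m ∈ Finset.range n,
        nint ((α (i + j) m - β * (g : ℝ) ^ i * m) - (α (i + j) n - β * (g : ℝ) ^ i * n)) ^ 2 := rfl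
    rw [hsx] at hmul ⊢
    linarith [hlb]
  -- product formula for |F|
  have habsF : ‖F g α lam j β‖
      = ∏ i ∈ Finset.range lam, (‖∑ d ∈ Finset.range g,
          eC (α (i + j) d - β * (g : ℝ) ^ i * d)‖ / g) := by
    simp only [F]
    rw [sum_eq_prod g hg α lam j β, norm_mul, norm_inv, norm_pow, Complex.norm_natCast, norm_prod,
      Finset.prod_div_distrib, Finset.prod_const, Finset.card_range, inv_mul_eq_div]
  -- step 1
  have h1 : ‖F g α lam j β‖
      ≤ Real.exp (-(8 / (g : ℝ) ^ 2) * ∑ i ∈ Finset.range lam, sAux g α j β i) := by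
    rw [habsF]
    have hrhs : Real.exp (-(8 / (g : ℝ) ^ 2) * ∑ i ∈ Finset.range lam, sAux g α j β i)
        = ∏ i ∈ Finset.range lam, Real.exp (-(8 / (g : ℝ) ^ 2) * sAux g α j β i) := by
      rw [Finset.mul_sum, Real.exp_sum]
    rw [hrhs]
    refine Finset.prod_le_prod (fun i _ => ?_) (fun i _ => hphi i)
    exact div_nonneg (norm_nonneg _) hGpos.le
  -- step 2 : the numeric inequality
  have h2 : (sig g α lam j - 1 / 20) * Real.log g
      ≤ (8 / (g : ℝ) ^ 2) * ∑ i ∈ Finset.range lam, sAux g α j β i := by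
    rcases lam with _ | n
    · simp only [sig, Finset.range_zero, Finset.sum_empty]
      nlinarith [hlog]
    · set C : ℝ := (2 * Real.log 2) / (((g : ℝ) - 1) * (g : ℝ) ^ 4 * (Real.log g) ^ 2)
        * (2 * (g : ℝ) ^ 2) with hC
      set S : ℝ := ∑ i ∈ Finset.range (n + 1), sAux g α j β i with hS
      have hSnn : 0 ≤ S := Finset.sum_nonneg fun i _ => sAux_nonneg g α j β i
      have hC0 : 0 ≤ C := mul_nonneg (cg_nonneg g hg) (by positivity)
      have hSmono1 : ∑ i ∈ Finset.range n, sAux g α j β i ≤ S := by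
        rw [hS, Finset.sum_range_succ]
        linarith [sAux_nonneg g α j β n]
      have hSmono2 : ∑ i ∈ Finset.range n, sAux g α j β (i + 1) ≤ S := by
        have he : S = (∑ i ∈ Finset.range n, sAux g α j β (i + 1)) + sAux g α j β 0 := by
          rw [hS, Finset.sum_range_succ']
        linarith [sAux_nonneg g α j β 0, he]
      have hA : ∑ i ∈ Finset.range n, gam g α i j ≤ C * (2 * S) := by
        calc ∑ i ∈ Finset.range n, gam g α i j
            ≤ ∑ i ∈ Finset.range n, ((2 * Real.log 2) /
                (((g : ℝ) - 1) * (g : ℝ) ^ 4 * (Real.log g) ^ 2)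
                * (2 * (g : ℝ) ^ 2 * (sAux g α j β i + sAux g α j β (i + 1)))) :=
              Finset.sum_le_sum fun i _ => gam_le_pair g hg α i j β
          _ = C * ((∑ i ∈ Finset.range n, sAux g α j β i)
                + ∑ i ∈ Finset.range n, sAux g α j β (i + 1)) := by
              rw [← Finset.sum_add_distrib, Finset.mul_sum]
              exact Finset.sum_congr rfl fun i _ => by rw [hC]; ring
          _ ≤ C * (2 * S) := by
              refine mul_le_mul_of_nonneg_left ?_ hC0
              linarith [hSmono1, hSmono2]
      have hcap := gam_cap g hg α n j
      have hsig : sig g α (n + 1) j - 1 / 20 ≤ C * (2 * S) := by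
        rw [sig, Finset.sum_range_succ]
        have : ∑ i ∈ Finset.range n, gam g α i j = sig g α n j := rfl
        linarith [hA, hcap]
      have hKL : C * Real.log g ≤ 4 / (g : ℝ) ^ 2 := by
        have hne1 : (g : ℝ) - 1 ≠ 0 := by linarith
        have hne2 : (g : ℝ) ≠ 0 := by linarith
        have hne3 : Real.log g ≠ 0 := ne_of_gt hlog
        have hL2le : Real.log 2 ≤ Real.log g := Real.log_le_log (by norm_num) hG
        have hL2pos : (0 : ℝ) < Real.log 2 := Real.log_pos (by norm_num)
        have he : C * Real.log g
            = (4 * Real.log 2) / (((g : ℝ) - 1) * (g : ℝ) ^ 2 * Real.log g) := by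
          rw [hC]
          field_simp
          ring
        have hDpos : (0 : ℝ) < ((g : ℝ) - 1) * (g : ℝ) ^ 2 * Real.log g :=
          mul_pos (mul_pos (by linarith) (by nlinarith)) hlog
        have hGsq : (0 : ℝ) < (g : ℝ) ^ 2 := by nlinarith
        rw [he, div_le_div_iff₀ hDpos hGsq]
        have hstep : Real.log 2 ≤ ((g : ℝ) - 1) * Real.log g := by nlinarith
        nlinarith [sq_nonneg (g : ℝ), hGpos, hstep]
      have hs2 : (sig g α (n + 1) j - 1 / 20) * Real.log g ≤ (C * (2 * S)) * Real.log g :=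
        mul_le_mul_of_nonneg_right hsig hlog.le
      have hs4 : (C * Real.log g) * (2 * S) ≤ (4 / (g : ℝ) ^ 2) * (2 * S) :=
        mul_le_mul_of_nonneg_right hKL (by linarith)
      calc (sig g α (n + 1) j - 1 / 20) * Real.log g
          ≤ (C * (2 * S)) * Real.log g := hs2
        _ = (C * Real.log g) * (2 * S) := by ring
        _ ≤ (4 / (g : ℝ) ^ 2) * (2 * S) := hs4
        _ = (8 / (g : ℝ) ^ 2) * S := by ring
  -- step 3 : rewrite the right-hand side
  have h3 : (g : ℝ) ^ ((1 : ℝ) / 20) * (g : ℝ) ^ (-(sig g α lam j))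
      = Real.exp ((1 / 20 - sig g α lam j) * Real.log g) := by
    rw [Real.rpow_def_of_pos hGpos, Real.rpow_def_of_pos hGpos, ← Real.exp_add]
    congr 1
    ring
  rw [h3]
  refine h1.trans (Real.exp_le_exp.2 ?_)
  nlinarith [h2]
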